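/- Let ω > 0, T = 2π/ω, and let f : ℝ → ℝ be continuous, T-periodic, with ∫₀ᵀ f(τ) dτ = 0. Define q(t) = exp(i·∫₀ᵗ f(τ) dτ), Q₀ = q², Q₁(t) = Q₀(t)·∫₀ᵗ conj(Q₀(τ)) dτ, and Q₃(t) = Q₀(t)·∫₀ᵗ Q₁(τ) dτ. Assume condition (III): the mean values M(Q₀), M(Q₁), M(Q₃) exist, M(Q₀) = 0, M(Q₁) = 0, and M(Q₃) ≠ 0. Then there exists a sequence of constants κ : ℕ → ℂ such that all the functions v_n : ℝ → ℂ defined recursively by v₁(t) = κ₁·q(t), v₂(t) = q(t)·( i·∫₀ᵗ (κ₁²·Q₀(τ) − conj(Q₀(τ))) dτ + κ₂ ), and v_n(t) = q(t)·( i·∫₀ᵗ Σ_{p=1}^{n−1} v_p(τ)·v_{n−p}(τ) dτ + κ_n ) for n ≥ 3, are T-periodic. -/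

import Mathlib

open Filter

noncomputable section

/-- The mean value `M(h)` of a function `h : ℝ → ℂ`:
`M(h) = L` iff `(1/(2T)) ∫_{-T}^{T} h(t) dt → L` as `T → +∞`. -/
def MeanValueIs (h : ℝ → ℂ) (L : ℂ) : Prop :=
  Tendsto (fun T : ℝ => (1 / (2 * T)) • ∫ t in (-T)..T, h t) atTop (nhds L)

open Filter intervalIntegral Function
set_option maxHeartbeats 1000000
namespace Sec

/-- primitive -/
def primC (Q : ℝ → ℂ) : ℝ → ℂ := fun t => ∫ τ in (0:ℝ)..t, Q τ

lemma primC_hasDerivAt {Q : ℝ → ℂ} (hQ : Continuous Q) (t : ℝ) :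
    HasDerivAt (primC Q) (Q t) t :=
  (hQ.integral_hasStrictDerivAt 0 t).hasDerivAt

lemma primC_continuous {Q : ℝ → ℂ} (hQ : Continuous Q) : Continuous (primC Q) :=
  continuous_iff_continuousAt.2 fun t => (primC_hasDerivAt hQ t).continuousAt

lemma primC_zero (Q : ℝ → ℂ) : primC Q 0 = 0 := integral_same

/-- two functions with the same derivative agreeing at 0 agree -/
lemma eq_of_deriv {F G : ℝ → ℂ} {φ : ℝ → ℂ}
    (hF : ∀ t, HasDerivAt F (φ t) t) (hG : ∀ t, HasDerivAt G (φ t) t)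
    (h0 : F 0 = G 0) (t : ℝ) : F t = G t := by
  have h : ∀ s, HasDerivAt (fun u => F u - G u) 0 s := by
    intro s; have := (hF s).sub (hG s); rw [sub_self] at this; exact this
  have hc : F t - G t = F 0 - G 0 :=
    is_const_of_deriv_eq_zero (fun x => (h x).differentiableAt) (fun x => (h x).deriv) t 0
  rw [h0, sub_self] at hc
  exact sub_eq_zero.mp hc


lemma intervalIntegral_conj {f : ℝ → ℂ} {a b : ℝ} :
    ∫ x in a..b, (starRingEnd ℂ) (f x) = (starRingEnd ℂ) (∫ x in a..b, f x) := by
  simp only [intervalIntegral, _root_.integral_conj, map_sub]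

/-- primitive of a periodic function with zero period-integral is periodic -/
lemma primitive_periodic {T : ℝ} {g : ℝ → ℂ} (hg : Continuous g)
    (hp : Function.Periodic g T) (h0 : (∫ τ in (0:ℝ)..T, g τ) = 0) (t : ℝ) :
    (∫ τ in (0:ℝ)..(t + T), g τ) = ∫ τ in (0:ℝ)..t, g τ := by
  have hadd : (∫ τ in (0:ℝ)..t, g τ) + (∫ τ in t..(t+T), g τ) = ∫ τ in (0:ℝ)..(t+T), g τ :=
    integral_add_adjacent_intervals (hg.intervalIntegrable _ _) (hg.intervalIntegrable _ _)
  have hper : (∫ τ in t..(t+T), g τ) = ∫ τ in (0:ℝ)..(0+T), g τ := hp.intervalIntegral_add_eq t 0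
  rw [zero_add] at hper
  rw [← hadd, hper, h0, add_zero]

/-- mean value of continuous periodic function equals (1/T) ∫₀ᵀ -/
lemma meanValue_eq {T : ℝ} (hT : 0 < T) {g : ℝ → ℂ} (hg : Continuous g)
    (hp : Function.Periodic g T) {L : ℂ}
    (hM : Tendsto (fun S : ℝ => (1 / (2 * S)) • ∫ t in (-S)..S, g t) atTop (nhds L)) :
    (∫ τ in (0:ℝ)..T, g τ) = T • L := by
  have hint : ∀ a b : ℝ, IntervalIntegrable g MeasureTheory.MeasureSpace.volume a b :=
    fun a b => hg.intervalIntegrable a b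
  -- integral over [-mT, mT]
  have key : ∀ m : ℕ, (∫ t in (-(m * T))..(m * T), g t) = ((2 * m : ℤ)) • ∫ τ in (0:ℝ)..T, g τ := by
    intro m
    have h1 : (∫ t in (-(m*T))..(-(m*T) + (2*m : ℤ) • T), g t)
        = (2*m : ℤ) • ∫ t in (-(m*T))..(-(m*T) + T), g t :=
      hp.intervalIntegral_add_zsmul_eq (2*m) (-(m*T)) hint
    have h2 : (-(m*T) + (2*m : ℤ) • T) = (m : ℝ) * T := by
      rw [zsmul_eq_mul]; push_cast; ring
    have h3 : (∫ t in (-(m*T))..(-(m*T) + T), g t) = ∫ t in (0:ℝ)..(0+T), g t :=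
      hp.intervalIntegral_add_eq _ 0
    rw [h2] at h1
    rw [h1, h3, zero_add]
  -- the sequence S m = (m+1) * T
  have hseq : Tendsto (fun m : ℕ => ((m:ℝ)+1) * T) atTop atTop := by
    apply Tendsto.atTop_mul_const hT
    exact tendsto_atTop_add_const_right _ 1 tendsto_natCast_atTop_atTop
  have hcomp := hM.comp hseq
  have heq : (fun m : ℕ => (1 / (2 * (((m:ℝ)+1) * T))) • ∫ t in (-(((m:ℝ)+1) * T))..(((m:ℝ)+1) * T), g t)
      = fun _ : ℕ => (1/T) • ∫ τ in (0:ℝ)..T, g τ := by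
    funext m
    have hm := key (m+1)
    push_cast at hm
    rw [hm]
    have hT' : T ≠ 0 := ne_of_gt hT
    have hm1 : ((m:ℝ)+1) ≠ 0 := by positivity
    rw [zsmul_eq_mul]
    rw [Complex.real_smul, Complex.real_smul]
    rw [← mul_assoc]
    congr 1
    have hTc : (T:ℂ) ≠ 0 := Complex.ofReal_ne_zero.mpr hT'
    have hmc : ((m:ℂ)+1) ≠ 0 := by
      have := Nat.cast_add_one_ne_zero (R := ℂ) m
      simpa using this
    push_cast
    field_simp
  rw [show (fun S : ℝ => (1 / (2 * S)) • ∫ t in (-S)..S, g t) ∘ (fun m : ℕ => ((m:ℝ)+1) * T)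
      = (fun m : ℕ => (1 / (2 * (((m:ℝ)+1) * T))) • ∫ t in (-(((m:ℝ)+1) * T))..(((m:ℝ)+1) * T), g t) from rfl,
    heq] at hcomp
  have hlim := tendsto_nhds_unique tendsto_const_nhds hcomp
  -- hlim : (1/T) • ∫ = L
  have : T • ((1/T) • ∫ τ in (0:ℝ)..T, g τ) = T • L := by rw [hlim]
  rwa [smul_smul, mul_one_div, div_self (ne_of_gt hT), one_smul] at this


def W (Q : ℝ → ℂ) (σ : ℕ → ℂ) : ℕ → ℝ → ℂ
  | 0 => fun _ => 0
  | 1 => fun _ => σ 1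
  | 2 => fun t => Complex.I * (∫ τ in (0:ℝ)..t, ((σ 1)^2 * Q τ - (starRingEnd ℂ) (Q τ))) + σ 2
  | (n+3) => fun t => Complex.I * (∫ τ in (0:ℝ)..t, Q τ *
      ∑ p ∈ (Finset.Ico 1 (n+3)).attach, W Q σ p.1 τ * W Q σ (n+3 - p.1) τ) + σ (n+3)
termination_by n => n
decreasing_by
  · have := (Finset.mem_Ico.mp p.2); omega
  · have := (Finset.mem_Ico.mp p.2); omega

lemma W_eq₃ (Q : ℝ → ℂ) (σ : ℕ → ℂ) (n : ℕ) (hn : 3 ≤ n) (t : ℝ) :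
    W Q σ n t = Complex.I * (∫ τ in (0:ℝ)..t, Q τ *
      ∑ p ∈ Finset.Ico 1 n, W Q σ p τ * W Q σ (n - p) τ) + σ n := by
  obtain ⟨m, rfl⟩ : ∃ m, n = m + 3 := ⟨n - 3, by omega⟩
  have hs : ∀ τ : ℝ, (∑ p ∈ (Finset.Ico 1 (m+3)).attach, W Q σ p.1 τ * W Q σ (m+3 - p.1) τ)
      = ∑ p ∈ Finset.Ico 1 (m+3), W Q σ p τ * W Q σ (m+3 - p) τ :=
    fun τ => Finset.sum_attach (Finset.Ico 1 (m+3)) (fun p => W Q σ p τ * W Q σ (m+3-p) τ)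
  rw [W]
  simp_rw [hs]

section
variable (Q : ℝ → ℂ)

def Qc : ℝ → ℂ := fun τ => (starRingEnd ℂ) (Q τ)
def Af : ℝ → ℂ := primC Q
def Jf : ℝ → ℂ := primC (Qc Q)
def Bf : ℝ → ℂ := primC (fun τ => Q τ * Jf Q τ)
def Kc (T : ℝ) : ℂ := ∫ τ in (0:ℝ)..T, Q τ * Bf Q τ

/-- integrand of the recursion at level n ≥ 3 -/
def Sg (σ : ℕ → ℂ) (n : ℕ) : ℝ → ℂ :=
  fun τ => Q τ * ∑ p ∈ Finset.Ico 1 n, W Q σ p τ * W Q σ (n - p) τ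

end
section
variable {T : ℝ} {Q : ℝ → ℂ}

lemma Qc_cont (hQc : Continuous Q) : Continuous (Qc Q) := continuous_star.comp hQc
lemma Af_cont (hQc : Continuous Q) : Continuous (Af Q) := primC_continuous hQc
lemma Jf_cont (hQc : Continuous Q) : Continuous (Jf Q) := primC_continuous (Qc_cont hQc)
lemma QJ_cont (hQc : Continuous Q) : Continuous (fun τ => Q τ * Jf Q τ) := hQc.mul (Jf_cont hQc)
lemma Bf_cont (hQc : Continuous Q) : Continuous (Bf Q) := primC_continuous (QJ_cont hQc)

lemma Af_deriv (hQc : Continuous Q) (t : ℝ) : HasDerivAt (Af Q) (Q t) t := primC_hasDerivAt hQc t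
lemma Jf_deriv (hQc : Continuous Q) (t : ℝ) : HasDerivAt (Jf Q) ((starRingEnd ℂ) (Q t)) t :=
  primC_hasDerivAt (Qc_cont hQc) t
lemma Bf_deriv (hQc : Continuous Q) (t : ℝ) : HasDerivAt (Bf Q) (Q t * Jf Q t) t :=
  primC_hasDerivAt (QJ_cont hQc) t

lemma Af_zero : Af Q 0 = 0 := primC_zero Q
lemma Jf_zero : Jf Q 0 = 0 := primC_zero _
lemma Bf_zero : Bf Q 0 = 0 := primC_zero _

lemma Jf_conj (t : ℝ) : Jf Q t = (starRingEnd ℂ) (Af Q t) := by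
  rw [Af, primC, ← intervalIntegral_conj]; rfl

/-- W at level 2, closed form -/
lemma W2_eq (hQc : Continuous Q) (σ : ℕ → ℂ) (t : ℝ) :
    W Q σ 2 t = Complex.I * ((σ 1)^2 * Af Q t - Jf Q t) + σ 2 := by
  rw [W]
  dsimp only
  congr 1
  congr 1
  have h2 : IntervalIntegrable (fun τ => (starRingEnd ℂ) (Q τ)) MeasureTheory.volume 0 t :=
    (Qc_cont hQc).intervalIntegrable _ _
  rw [intervalIntegral.integral_sub (f := fun τ => (σ 1)^2 * Q τ) ((continuous_const.mul hQc).intervalIntegrable _ _) h2,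
    intervalIntegral.integral_const_mul]
  rfl

lemma W_cont (hQc : Continuous Q) (σ : ℕ → ℂ) : ∀ n, Continuous (W Q σ n) := by
  intro n
  induction n using Nat.strong_induction_on with
  | _ n ih =>
    match n with
    | 0 => rw [W]; exact continuous_const
    | 1 => rw [W]; exact continuous_const
    | 2 =>
      have : W Q σ 2 = fun t => Complex.I * ((σ 1)^2 * Af Q t - Jf Q t) + σ 2 :=
        funext (W2_eq hQc σ)
      rw [this]
      exact (continuous_const.mul ((continuous_const.mul (Af_cont hQc)).sub (Jf_cont hQc))).add
        continuous_const
    | (m+3) =>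
      have hS : Continuous (Sg Q σ (m+3)) := by
        apply hQc.mul
        apply continuous_finset_sum
        intro p hp
        have h1 := Finset.mem_Ico.mp hp
        exact (ih p (by omega)).mul (ih (m+3-p) (by omega))
      have : W Q σ (m+3) = fun t => Complex.I * primC (Sg Q σ (m+3)) t + σ (m+3) :=
        funext fun t => W_eq₃ Q σ (m+3) (by omega) t
      rw [this]
      exact (continuous_const.mul (primC_continuous hS)).add continuous_const

lemma Sg_cont (hQc : Continuous Q) (σ : ℕ → ℂ) (n : ℕ) : Continuous (Sg Q σ n) :=
  hQc.mul (continuous_finset_sum _ fun p _ => (W_cont hQc σ p).mul (W_cont hQc σ _))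

end

section
variable {T : ℝ} {Q : ℝ → ℂ}

lemma Qc_per (hQp : Periodic Q T) : Periodic (Qc Q) T := fun t => by
  simp only [Qc, hQp t]

lemma Af_per (hQc : Continuous Q) (hQp : Periodic Q T) (h0 : Af Q T = 0) :
    Periodic (Af Q) T := fun t =>
  primitive_periodic hQc hQp h0 t

lemma Jf_per (hQc : Continuous Q) (hQp : Periodic Q T) (h0 : Af Q T = 0) :
    Periodic (Jf Q) T := fun t =>
  primitive_periodic (Qc_cont hQc) (Qc_per hQp)
    (by show Jf Q T = 0; rw [Jf_conj, h0, map_zero]) t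

lemma QJ_per (hQc : Continuous Q) (hQp : Periodic Q T) (h0 : Af Q T = 0) :
    Periodic (fun τ => Q τ * Jf Q τ) T := fun t => by
  simp only [hQp t, Jf_per hQc hQp h0 t]

lemma Bf_per (hQc : Continuous Q) (hQp : Periodic Q T) (h0 : Af Q T = 0) (h1 : Bf Q T = 0) :
    Periodic (Bf Q) T := fun t =>
  primitive_periodic (QJ_cont hQc) (QJ_per hQc hQp h0) h1 t

-- base integral values
variable (hQc : Continuous Q) (h0 : Af Q T = 0) (h1 : Bf Q T = 0)

include hQc h0 in
lemma vA : (∫ τ in (0:ℝ)..T, Q τ * Af Q τ) = 0 := by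
  have key : (∫ τ in (0:ℝ)..T, (Q τ * Af Q τ + Af Q τ * Q τ)) = 0 := by
    rw [intervalIntegral.integral_eq_sub_of_hasDerivAt
      (f := fun x => Af Q x * Af Q x)
      (fun x _ => (Af_deriv hQc x).mul (Af_deriv hQc x))
      (((hQc.mul (Af_cont hQc)).add ((Af_cont hQc).mul hQc)).intervalIntegrable _ _)]
    rw [h0, Af_zero]; ring
  have h2 : (∫ τ in (0:ℝ)..T, (Q τ * Af Q τ + Af Q τ * Q τ))
      = ∫ τ in (0:ℝ)..T, (2:ℂ) * (Q τ * Af Q τ) := by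
    apply intervalIntegral.integral_congr
    intro x _; ring
  rw [h2, intervalIntegral.integral_const_mul] at key
  have := mul_eq_zero.mp key
  simpa using this

include hQc h0 in
lemma vA2 : (∫ τ in (0:ℝ)..T, Q τ * Af Q τ * Af Q τ) = 0 := by
  have key : (∫ τ in (0:ℝ)..T,
      ((Q τ * Af Q τ + Af Q τ * Q τ) * Af Q τ + Af Q τ * Af Q τ * Q τ)) = 0 := by
    rw [intervalIntegral.integral_eq_sub_of_hasDerivAt
      (f := fun x => Af Q x * Af Q x * Af Q x)
      (f' := fun x => (Q x * Af Q x + Af Q x * Q x) * Af Q x + Af Q x * Af Q x * Q x)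
      (fun x _ => ((Af_deriv hQc x).mul (Af_deriv hQc x)).mul (Af_deriv hQc x))
      (by apply Continuous.intervalIntegrable
          exact (((hQc.mul (Af_cont hQc)).add ((Af_cont hQc).mul hQc)).mul (Af_cont hQc)).add
            (((Af_cont hQc).mul (Af_cont hQc)).mul hQc))]
    rw [h0, Af_zero]; ring
  have h2 : (∫ τ in (0:ℝ)..T,
      ((Q τ * Af Q τ + Af Q τ * Q τ) * Af Q τ + Af Q τ * Af Q τ * Q τ))
      = ∫ τ in (0:ℝ)..T, (3:ℂ) * (Q τ * Af Q τ * Af Q τ) := by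
    apply intervalIntegral.integral_congr
    intro x _; ring
  rw [h2, intervalIntegral.integral_const_mul] at key
  have := mul_eq_zero.mp key
  simpa using this

include hQc h0 h1 in
lemma vAJ : (∫ τ in (0:ℝ)..T, Q τ * Af Q τ * Jf Q τ) = - Kc Q T := by
  have key : (∫ τ in (0:ℝ)..T, (Q τ * Bf Q τ + Af Q τ * (Q τ * Jf Q τ))) = 0 := by
    rw [intervalIntegral.integral_eq_sub_of_hasDerivAt
      (f := fun x => Af Q x * Bf Q x)
      (fun x _ => (Af_deriv hQc x).mul (Bf_deriv hQc x))
      (by apply Continuous.intervalIntegrable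
          exact (hQc.mul (Bf_cont hQc)).add ((Af_cont hQc).mul (hQc.mul (Jf_cont hQc))))]
    rw [h0, Af_zero, Bf_zero]; ring
  rw [intervalIntegral.integral_add (f := fun τ => Q τ * Bf Q τ) (g := fun τ => Af Q τ * (Q τ * Jf Q τ)) ((hQc.mul (Bf_cont hQc)).intervalIntegrable _ _)
    (((Af_cont hQc).mul (hQc.mul (Jf_cont hQc))).intervalIntegrable _ _)] at key
  have h2 : (∫ τ in (0:ℝ)..T, Af Q τ * (Q τ * Jf Q τ))
      = ∫ τ in (0:ℝ)..T, Q τ * Af Q τ * Jf Q τ := by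
    apply intervalIntegral.integral_congr; intro x _; ring
  rw [h2] at key
  have hK : (∫ τ in (0:ℝ)..T, Q τ * Bf Q τ) = Kc Q T := rfl
  rw [hK] at key
  linear_combination key

include hQc h0 h1 in
lemma vJ2 : (∫ τ in (0:ℝ)..T, Q τ * Jf Q τ * Jf Q τ)
    = 2 * (starRingEnd ℂ) (Kc Q T) := by
  have key : (∫ τ in (0:ℝ)..T,
      (Q τ * (Jf Q τ * Jf Q τ) + Af Q τ * ((starRingEnd ℂ) (Q τ) * Jf Q τ
        + Jf Q τ * (starRingEnd ℂ) (Q τ)))) = 0 := by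
    rw [intervalIntegral.integral_eq_sub_of_hasDerivAt
      (f := fun x => Af Q x * (Jf Q x * Jf Q x))
      (fun x _ => (Af_deriv hQc x).mul ((Jf_deriv hQc x).mul (Jf_deriv hQc x)))
      (by apply Continuous.intervalIntegrable
          exact (hQc.mul ((Jf_cont hQc).mul (Jf_cont hQc))).add ((Af_cont hQc).mul
            (((Qc_cont hQc).mul (Jf_cont hQc)).add ((Jf_cont hQc).mul (Qc_cont hQc)))))]
    rw [h0, Af_zero]; ring
  have ha : IntervalIntegrable (fun τ => Q τ * (Jf Q τ * Jf Q τ)) MeasureTheory.volume 0 T :=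
    (hQc.mul ((Jf_cont hQc).mul (Jf_cont hQc))).intervalIntegrable _ _
  have hb : IntervalIntegrable (fun τ => Af Q τ * ((starRingEnd ℂ) (Q τ) * Jf Q τ
      + Jf Q τ * (starRingEnd ℂ) (Q τ))) MeasureTheory.volume 0 T :=
    ((Af_cont hQc).mul (((Qc_cont hQc).mul (Jf_cont hQc)).add
      ((Jf_cont hQc).mul (Qc_cont hQc)))).intervalIntegrable _ _
  rw [intervalIntegral.integral_add ha hb] at key
  have h2 : (∫ τ in (0:ℝ)..T, Af Q τ * ((starRingEnd ℂ) (Q τ) * Jf Q τ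
        + Jf Q τ * (starRingEnd ℂ) (Q τ)))
      = ∫ τ in (0:ℝ)..T, (2:ℂ) * ((starRingEnd ℂ) (Q τ * Af Q τ * Jf Q τ)) := by
    apply intervalIntegral.integral_congr; intro x _
    have hA : (starRingEnd ℂ) (Af Q x) = Jf Q x := (Jf_conj x).symm
    have hJ : (starRingEnd ℂ) (Jf Q x) = Af Q x := by rw [Jf_conj, Complex.conj_conj]
    simp only [map_mul, hA, hJ]
    ring
  rw [h2, intervalIntegral.integral_const_mul, intervalIntegral_conj,
    vAJ hQc h0 h1] at key
  have h3 : (∫ τ in (0:ℝ)..T, Q τ * (Jf Q τ * Jf Q τ))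
      = ∫ τ in (0:ℝ)..T, Q τ * Jf Q τ * Jf Q τ := by
    apply intervalIntegral.integral_congr; intro x _; ring
  rw [h3] at key
  rw [map_neg] at key
  linear_combination key

end

section
variable {T : ℝ} {Q : ℝ → ℂ}

lemma W0_eq (σ : ℕ → ℂ) (t : ℝ) : W Q σ 0 t = 0 := by rw [W]
lemma W1_eq (σ : ℕ → ℂ) (t : ℝ) : W Q σ 1 t = σ 1 := by rw [W]

lemma integral_split {g h : ℝ → ℂ} {a b : ℝ} (hg : Continuous g) (hh : Continuous h) :
    (∫ τ in a..b, (g τ + h τ)) = (∫ τ in a..b, g τ) + ∫ τ in a..b, h τ :=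
  intervalIntegral.integral_add (hg.intervalIntegrable _ _) (hh.intervalIntegrable _ _)

/-- master combination integral -/
lemma combo (hQc : Continuous Q) (h0 : Af Q T = 0) (h1 : Bf Q T = 0)
    (c0 c1 c2 c3 c4 c5 c6 : ℂ) :
    (∫ τ in (0:ℝ)..T, (c0 * Q τ + (c1 * (Q τ * Af Q τ) + (c2 * (Q τ * Af Q τ * Af Q τ) +
      (c3 * (Q τ * Jf Q τ) + (c4 * (Q τ * Af Q τ * Jf Q τ) + (c5 * (Q τ * Jf Q τ * Jf Q τ) +
        c6 * (Q τ * Bf Q τ))))))))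
    = c4 * (-(Kc Q T)) + (c5 * (2 * (starRingEnd ℂ) (Kc Q T)) + c6 * Kc Q T) := by
  have cA := Af_cont hQc
  have cJ := Jf_cont hQc
  have cB := Bf_cont hQc
  have k0 : Continuous (fun τ => c0 * Q τ) := continuous_const.mul hQc
  have k1 : Continuous (fun τ => c1 * (Q τ * Af Q τ)) := continuous_const.mul (hQc.mul cA)
  have k2 : Continuous (fun τ => c2 * (Q τ * Af Q τ * Af Q τ)) :=
    continuous_const.mul ((hQc.mul cA).mul cA)
  have k3 : Continuous (fun τ => c3 * (Q τ * Jf Q τ)) := continuous_const.mul (hQc.mul cJ)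
  have k4 : Continuous (fun τ => c4 * (Q τ * Af Q τ * Jf Q τ)) :=
    continuous_const.mul ((hQc.mul cA).mul cJ)
  have k5 : Continuous (fun τ => c5 * (Q τ * Jf Q τ * Jf Q τ)) :=
    continuous_const.mul ((hQc.mul cJ).mul cJ)
  have k6 : Continuous (fun τ => c6 * (Q τ * Bf Q τ)) := continuous_const.mul (hQc.mul cB)
  erw [integral_split k0 (k1.add (k2.add (k3.add (k4.add (k5.add k6))))),
    integral_split k1 (k2.add (k3.add (k4.add (k5.add k6)))),
    integral_split k2 (k3.add (k4.add (k5.add k6))),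
    integral_split k3 (k4.add (k5.add k6)),
    integral_split k4 (k5.add k6),
    integral_split k5 k6]
  rw [intervalIntegral.integral_const_mul, intervalIntegral.integral_const_mul,
    intervalIntegral.integral_const_mul, intervalIntegral.integral_const_mul,
    intervalIntegral.integral_const_mul, intervalIntegral.integral_const_mul,
    intervalIntegral.integral_const_mul]
  have e0 : (∫ τ in (0:ℝ)..T, Q τ) = 0 := h0
  have e3 : (∫ τ in (0:ℝ)..T, Q τ * Jf Q τ) = 0 := h1
  have e6 : (∫ τ in (0:ℝ)..T, Q τ * Bf Q τ) = Kc Q T := rfl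
  rw [e0, e3, e6, vA hQc h0, vA2 hQc h0, vAJ hQc h0 h1, vJ2 hQc h0 h1]
  ring

/-- primitive of Q * W2 in closed form -/
lemma primQW2 (hQc : Continuous Q) (σ : ℕ → ℂ) (t : ℝ) :
    (∫ τ in (0:ℝ)..t, Q τ * W Q σ 2 τ)
      = Complex.I * ((σ 1)^2 * (Af Q t * Af Q t) / 2 - Bf Q t) + σ 2 * Af Q t := by
  have hW2 := W_cont hQc σ 2
  apply eq_of_deriv (φ := fun t => Q t * W Q σ 2 t)
    (F := fun t => ∫ τ in (0:ℝ)..t, Q τ * W Q σ 2 τ)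
  · intro s
    exact primC_hasDerivAt (hQc.mul hW2) s
  · intro s
    have hd : HasDerivAt
        (fun u => Complex.I * ((σ 1)^2 * (Af Q u * Af Q u) / 2 - Bf Q u) + σ 2 * Af Q u)
        (Complex.I * ((σ 1)^2 * (Q s * Af Q s + Af Q s * Q s) / 2 - Q s * Jf Q s)
          + σ 2 * Q s) s := by
      exact ((((((Af_deriv hQc s).mul (Af_deriv hQc s)).const_mul ((σ 1)^2)).div_const 2).sub
        (Bf_deriv hQc s)).const_mul Complex.I).add ((Af_deriv hQc s).const_mul (σ 2))
    have heq : Complex.I * ((σ 1)^2 * (Q s * Af Q s + Af Q s * Q s) / 2 - Q s * Jf Q s)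
          + σ 2 * Q s = Q s * W Q σ 2 s := by
      rw [W2_eq hQc]; ring
    rwa [heq] at hd
  · simp [Af_zero, Bf_zero, primC_zero, intervalIntegral.integral_same]

lemma W3_eq (hQc : Continuous Q) (σ : ℕ → ℂ) (t : ℝ) :
    W Q σ 3 t = Complex.I * (2 * σ 1 *
      (Complex.I * ((σ 1)^2 * (Af Q t * Af Q t) / 2 - Bf Q t) + σ 2 * Af Q t)) + σ 3 := by
  rw [W_eq₃ Q σ 3 (by norm_num) t]
  congr 2
  have hsum : ∀ τ : ℝ, (∑ p ∈ Finset.Ico 1 3, W Q σ p τ * W Q σ (3 - p) τ)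
      = 2 * σ 1 * W Q σ 2 τ := by
    intro τ
    rw [Finset.sum_Ico_succ_top (by norm_num), Finset.sum_Ico_succ_top (by norm_num),
      Finset.Ico_self, Finset.sum_empty]
    norm_num [W1_eq]
    try ring
  have : (∫ τ in (0:ℝ)..t, Q τ * ∑ p ∈ Finset.Ico 1 3, W Q σ p τ * W Q σ (3 - p) τ)
      = ∫ τ in (0:ℝ)..t, (2 * σ 1) * (Q τ * W Q σ 2 τ) := by
    apply intervalIntegral.integral_congr
    intro x _
    simp only [hsum x]; ring
  rw [this, intervalIntegral.integral_const_mul, primQW2 hQc]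
  try ring

end

section
variable {T : ℝ} {Q : ℝ → ℂ}

lemma prim_linear (hQc : Continuous Q) (a b : ℂ) (t : ℝ) :
    (∫ τ in (0:ℝ)..t, (a * (Q τ * Af Q τ) + b * Q τ))
      = a * (Af Q t * Af Q t) / 2 + b * Af Q t := by
  apply eq_of_deriv (φ := fun s => a * (Q s * Af Q s) + b * Q s)
    (F := fun t => ∫ τ in (0:ℝ)..t, (a * (Q τ * Af Q τ) + b * Q τ))
  · intro s
    exact primC_hasDerivAt ((continuous_const.mul (hQc.mul (Af_cont hQc))).add
      (continuous_const.mul hQc)) s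
  · intro s
    have hd : HasDerivAt (fun u => a * (Af Q u * Af Q u) / 2 + b * Af Q u)
        (a * (Q s * Af Q s + Af Q s * Q s) / 2 + b * Q s) s :=
      ((((Af_deriv hQc s).mul (Af_deriv hQc s)).const_mul a).div_const 2).add
        ((Af_deriv hQc s).const_mul b)
    have heq : a * (Q s * Af Q s + Af Q s * Q s) / 2 + b * Q s
        = a * (Q s * Af Q s) + b * Q s := by ring
    rwa [heq] at hd
  · simp [Af_zero, intervalIntegral.integral_same]

variable (hQc : Continuous Q) (h0 : Af Q T = 0) (h1 : Bf Q T = 0)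

include hQc h0 h1 in
lemma qW2 (σ : ℕ → ℂ) : (∫ τ in (0:ℝ)..T, Q τ * W Q σ 2 τ) = 0 := by
  have hcon : (∫ τ in (0:ℝ)..T, Q τ * W Q σ 2 τ)
      = ∫ τ in (0:ℝ)..T, (σ 2 * Q τ + ((Complex.I * (σ 1)^2) * (Q τ * Af Q τ) +
        ((0:ℂ) * (Q τ * Af Q τ * Af Q τ) + ((-Complex.I) * (Q τ * Jf Q τ) +
        ((0:ℂ) * (Q τ * Af Q τ * Jf Q τ) + ((0:ℂ) * (Q τ * Jf Q τ * Jf Q τ) +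
        (0:ℂ) * (Q τ * Bf Q τ))))))) := by
    apply intervalIntegral.integral_congr
    intro x _
    dsimp only
    rw [W2_eq hQc]; ring
  rw [hcon, combo hQc h0 h1]; ring

include hQc h0 h1 in
lemma qAW2 (σ : ℕ → ℂ) : (∫ τ in (0:ℝ)..T, Q τ * Af Q τ * W Q σ 2 τ)
    = Complex.I * Kc Q T := by
  have hcon : (∫ τ in (0:ℝ)..T, Q τ * Af Q τ * W Q σ 2 τ)
      = ∫ τ in (0:ℝ)..T, ((0:ℂ) * Q τ + ((σ 2) * (Q τ * Af Q τ) +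
        ((Complex.I * (σ 1)^2) * (Q τ * Af Q τ * Af Q τ) + ((0:ℂ) * (Q τ * Jf Q τ) +
        ((-Complex.I) * (Q τ * Af Q τ * Jf Q τ) + ((0:ℂ) * (Q τ * Jf Q τ * Jf Q τ) +
        (0:ℂ) * (Q τ * Bf Q τ))))))) := by
    apply intervalIntegral.integral_congr
    intro x _
    dsimp only
    rw [W2_eq hQc]; ring
  rw [hcon, combo hQc h0 h1]; ring

include hQc h0 h1 in
lemma qW3 (σ : ℕ → ℂ) : (∫ τ in (0:ℝ)..T, Q τ * W Q σ 3 τ) = 2 * σ 1 * Kc Q T := by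
  have hcon : (∫ τ in (0:ℝ)..T, Q τ * W Q σ 3 τ)
      = ∫ τ in (0:ℝ)..T, ((σ 3) * Q τ + ((Complex.I * (2 * σ 1 * σ 2)) * (Q τ * Af Q τ) +
        ((Complex.I * Complex.I * (σ 1)^3) * (Q τ * Af Q τ * Af Q τ) + ((0:ℂ) * (Q τ * Jf Q τ) +
        ((0:ℂ) * (Q τ * Af Q τ * Jf Q τ) + ((0:ℂ) * (Q τ * Jf Q τ * Jf Q τ) +
        (-(Complex.I * Complex.I) * 2 * σ 1) * (Q τ * Bf Q τ))))))) := by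
    apply intervalIntegral.integral_congr
    intro x _
    dsimp only
    rw [W3_eq hQc]; ring
  rw [hcon, combo hQc h0 h1]
  have hI : Complex.I * Complex.I = -1 := Complex.I_mul_I
  rw [hI]; ring

include hQc h0 h1 in
lemma order4 (σ : ℕ → ℂ) : (∫ τ in (0:ℝ)..T, Sg Q σ 4 τ)
    = 2 * (σ 1)^2 * Kc Q T - 2 * (starRingEnd ℂ) (Kc Q T) := by
  have hsum : ∀ τ : ℝ, Sg Q σ 4 τ
      = Q τ * (σ 1 * W Q σ 3 τ + W Q σ 2 τ * W Q σ 2 τ + W Q σ 3 τ * σ 1) := by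
    intro τ
    rw [Sg]
    rw [Finset.sum_Ico_succ_top (by norm_num), Finset.sum_Ico_succ_top (by norm_num),
      Finset.sum_Ico_succ_top (by norm_num), Finset.Ico_self, Finset.sum_empty]
    norm_num [W1_eq]
  have hcon : (∫ τ in (0:ℝ)..T, Sg Q σ 4 τ)
      = ∫ τ in (0:ℝ)..T, ((2 * σ 1 * σ 3 + σ 2 * σ 2) * Q τ +
        ((Complex.I * (6 * (σ 1)^2 * σ 2)) * (Q τ * Af Q τ) +
        ((Complex.I * Complex.I * (3 * (σ 1)^4)) * (Q τ * Af Q τ * Af Q τ) +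
        ((-Complex.I * (2 * σ 2)) * (Q τ * Jf Q τ) +
        ((-(Complex.I * Complex.I) * 2 * (σ 1)^2) * (Q τ * Af Q τ * Jf Q τ) +
        ((Complex.I * Complex.I) * (Q τ * Jf Q τ * Jf Q τ) +
        (-(Complex.I * Complex.I) * 4 * (σ 1)^2) * (Q τ * Bf Q τ))))))) := by
    apply intervalIntegral.integral_congr
    intro x _
    dsimp only
    rw [hsum x, W3_eq hQc, W2_eq hQc]; ring
  rw [hcon, combo hQc h0 h1]
  have hI : Complex.I * Complex.I = -1 := Complex.I_mul_I
  rw [hI]; ring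

end

section
variable {T : ℝ} {Q : ℝ → ℂ}

lemma W_congr (σ σ' : ℕ → ℂ) (m : ℕ) (hag : ∀ j, j < m → σ j = σ' j) :
    ∀ p, p < m → ∀ t, W Q σ p t = W Q σ' p t := by
  intro p
  induction p using Nat.strong_induction_on with
  | _ p ih =>
    intro hp t
    match p with
    | 0 => rw [W0_eq, W0_eq]
    | 1 => rw [W1_eq, W1_eq, hag 1 hp]
    | 2 =>
      rw [W, W, hag 1 (by omega), hag 2 hp]
    | (k+3) =>
      rw [W_eq₃ Q σ (k+3) (by omega) t, W_eq₃ Q σ' (k+3) (by omega) t, hag (k+3) hp]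
      congr 2
      apply intervalIntegral.integral_congr
      intro x _
      dsimp only
      congr 1
      apply Finset.sum_congr rfl
      intro q hq
      have hq' := Finset.mem_Ico.mp hq
      rw [ih q (by omega) (by omega) x, ih (k+3-q) (by omega) (by omega) x]

lemma D1 (hQc : Continuous Q) (m : ℕ) (hm : 2 ≤ m) (σ σ' : ℕ → ℂ)
    (hag : ∀ j, j < m → σ j = σ' j) (t : ℝ) :
    W Q σ m t = W Q σ' m t + (σ m - σ' m) := by
  rcases Nat.lt_or_ge m 3 with h3 | h3
  · have hm2 : m = 2 := by omega
    subst hm2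
    rw [W2_eq hQc, W2_eq hQc, hag 1 (by omega)]
    ring
  · rw [W_eq₃ Q σ m (by omega) t, W_eq₃ Q σ' m (by omega) t]
    have : (∫ τ in (0:ℝ)..t, Q τ * ∑ p ∈ Finset.Ico 1 m, W Q σ p τ * W Q σ (m - p) τ)
        = ∫ τ in (0:ℝ)..t, Q τ * ∑ p ∈ Finset.Ico 1 m, W Q σ' p τ * W Q σ' (m - p) τ := by
      apply intervalIntegral.integral_congr
      intro x _
      dsimp only
      congr 1
      apply Finset.sum_congr rfl
      intro q hq
      have hq' := Finset.mem_Ico.mp hq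
      rw [W_congr σ σ' m hag q (by omega) x, W_congr σ σ' m hag (m-q) (by omega) x]
    rw [this]
    ring

lemma D2 (hQc : Continuous Q) (m : ℕ) (hm : 2 ≤ m) (σ σ' : ℕ → ℂ)
    (hag : ∀ j, j < m → σ j = σ' j) (t : ℝ) :
    W Q σ (m+1) t = W Q σ' (m+1) t
      + Complex.I * (2 * σ 1 * (σ m - σ' m)) * Af Q t + (σ (m+1) - σ' (m+1)) := by
  set δ := σ m - σ' m with hδ
  have key : ∀ τ : ℝ, (∑ p ∈ Finset.Ico 1 (m+1), W Q σ p τ * W Q σ (m+1-p) τ)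
      = (∑ p ∈ Finset.Ico 1 (m+1), W Q σ' p τ * W Q σ' (m+1-p) τ) + 2 * σ 1 * δ := by
    intro τ
    rw [← sub_eq_iff_eq_add', ← Finset.sum_sub_distrib]
    have hterm : ∀ p ∈ Finset.Ico 1 (m+1),
        W Q σ p τ * W Q σ (m+1-p) τ - W Q σ' p τ * W Q σ' (m+1-p) τ
        = (if p = 1 then σ 1 * δ else 0) + (if p = m then σ 1 * δ else 0) := by
      intro p hp
      have hp' := Finset.mem_Ico.mp hp
      by_cases h1 : p = 1
      · subst h1
        have hne : (1:ℕ) ≠ m := by omega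
        rw [if_pos rfl, if_neg hne]
        have hmp : m + 1 - 1 = m := by omega
        rw [hmp, W1_eq, W1_eq, D1 hQc m hm σ σ' hag τ, ← hag 1 (by omega)]
        ring
      · by_cases h2 : p = m
        · have hmp : m + 1 - p = 1 := by omega
          rw [if_neg h1, if_pos h2, hmp, W1_eq, W1_eq, h2, D1 hQc m hm σ σ' hag τ,
            ← hag 1 (by omega)]
          ring
        · rw [if_neg h1, if_neg h2]
          rw [W_congr σ σ' m hag p (by omega) τ, W_congr σ σ' m hag (m+1-p) (by omega) τ]
          ring
    rw [Finset.sum_congr rfl hterm, Finset.sum_add_distrib,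
      Finset.sum_ite_eq' (Finset.Ico 1 (m+1)) 1 (fun _ => σ 1 * δ),
      Finset.sum_ite_eq' (Finset.Ico 1 (m+1)) m (fun _ => σ 1 * δ),
      if_pos (Finset.mem_Ico.mpr ⟨le_refl 1, by omega⟩),
      if_pos (Finset.mem_Ico.mpr ⟨by omega, by omega⟩)]
    ring
  rw [W_eq₃ Q σ (m+1) (by omega) t, W_eq₃ Q σ' (m+1) (by omega) t]
  have hsplit : (∫ τ in (0:ℝ)..t, Q τ * ∑ p ∈ Finset.Ico 1 (m+1), W Q σ p τ * W Q σ (m+1-p) τ)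
      = (∫ τ in (0:ℝ)..t, Q τ * ∑ p ∈ Finset.Ico 1 (m+1), W Q σ' p τ * W Q σ' (m+1-p) τ)
        + (2 * σ 1 * δ) * Af Q t := by
    have hc1 : Continuous (fun τ => Q τ * ∑ p ∈ Finset.Ico 1 (m+1),
        W Q σ' p τ * W Q σ' (m+1-p) τ) := Sg_cont hQc σ' (m+1)
    have hstep : (∫ τ in (0:ℝ)..t, Q τ * ∑ p ∈ Finset.Ico 1 (m+1), W Q σ p τ * W Q σ (m+1-p) τ)
        = ∫ τ in (0:ℝ)..t, ((Q τ * ∑ p ∈ Finset.Ico 1 (m+1), W Q σ' p τ * W Q σ' (m+1-p) τ)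
          + (2 * σ 1 * δ) * Q τ) := by
      apply intervalIntegral.integral_congr
      intro x _
      dsimp only
      rw [key x]
      ring
    rw [hstep, integral_split (h := fun τ => (2 * σ 1 * δ) * Q τ) hc1 (continuous_const.mul hQc),
      intervalIntegral.integral_const_mul]
    rfl
  rw [hsplit]
  ring

end

section
variable {T : ℝ} {Q : ℝ → ℂ}

def Gf (Q : ℝ → ℂ) (s1 δ c₁ s2 ε : ℂ) : ℝ → ℂ := fun t =>
  2*Complex.I*s1^2*δ*(Af Q t*Af Q t) + 2*s1*c₁*Af Q t
  + 2*δ*(Complex.I*(s1^2*(Af Q t*Af Q t)/2 - Bf Q t) + s2*Af Q t) + ε*Af Q t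

lemma Gf_cont (hQc : Continuous Q) (s1 δ c₁ s2 ε : ℂ) : Continuous (Gf Q s1 δ c₁ s2 ε) := by
  unfold Gf
  have hA := Af_cont hQc
  have hB := Bf_cont hQc
  fun_prop

lemma Gf_zero (s1 δ c₁ s2 ε : ℂ) : Gf Q s1 δ c₁ s2 ε 0 = 0 := by
  simp [Gf, Af_zero, Bf_zero]

lemma Gf_deriv (hQc : Continuous Q) (s1 δ c₁ s2 ε : ℂ) (s : ℝ) :
    HasDerivAt (Gf Q s1 δ c₁ s2 ε)
      (2*Complex.I*s1^2*δ*(Q s*Af Q s + Af Q s*Q s) + 2*s1*c₁*Q s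
        + 2*δ*(Complex.I*(s1^2*(Q s*Af Q s + Af Q s*Q s)/2 - Q s * Jf Q s) + s2*Q s)
        + ε*Q s) s := by
  have hA := Af_deriv hQc s
  have hB := Bf_deriv hQc s
  exact ((((hA.mul hA).const_mul (2*Complex.I*s1^2*δ)).add (hA.const_mul (2*s1*c₁))).add
    (((((hA.mul hA).const_mul (s1^2)).div_const 2).sub hB).const_mul Complex.I |>.add
      (hA.const_mul s2) |>.const_mul (2*δ))).add (hA.const_mul ε)

lemma D3 (hQc : Continuous Q) (m : ℕ) (hm : 2 ≤ m) (σ σ' : ℕ → ℂ)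
    (hag : ∀ j, j < m → σ j = σ' j) (t : ℝ) :
    W Q σ (m+2) t = W Q σ' (m+2) t
      + Complex.I * Gf Q (σ 1) (σ m - σ' m) (σ (m+1) - σ' (m+1)) (σ' 2)
          (if m = 2 then (σ m - σ' m)^2 else 0) t
      + (σ (m+2) - σ' (m+2)) := by
  set δ := σ m - σ' m with hδ
  set c₁ := σ (m+1) - σ' (m+1) with hc₁
  set ε := if m = 2 then δ^2 else 0 with hε
  have key : ∀ τ : ℝ, Sg Q σ (m+2) τ = Sg Q σ' (m+2) τ
      + Q τ * (2*σ 1*(Complex.I*(2*σ 1*δ)*Af Q τ + c₁) + 2*δ*W Q σ' 2 τ + ε) := by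
    intro τ
    rw [Sg, Sg]
    rcases Nat.lt_or_ge m 3 with h3 | h3
    · have hm2 : m = 2 := by omega
      subst hm2
      rw [if_pos rfl] at hε
      rw [Finset.sum_Ico_succ_top (by norm_num), Finset.sum_Ico_succ_top (by norm_num),
        Finset.sum_Ico_succ_top (by norm_num), Finset.Ico_self, Finset.sum_empty,
        Finset.sum_Ico_succ_top (by norm_num), Finset.sum_Ico_succ_top (by norm_num),
        Finset.sum_Ico_succ_top (by norm_num), Finset.Ico_self, Finset.sum_empty]
      norm_num
      rw [W1_eq, W1_eq, D1 hQc 2 (by norm_num) σ σ' hag τ,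
        D2 hQc 2 (by norm_num) σ σ' hag τ, ← hag 1 (by omega), hε]
      ring
    · -- generic: changed indices 1, 2, m, m+1 within Ico 1 (m+2)
      rw [if_neg (by omega)] at hε
      have hsub : (∑ p ∈ Finset.Ico 1 (m+2), W Q σ p τ * W Q σ (m+2-p) τ)
          - (∑ p ∈ Finset.Ico 1 (m+2), W Q σ' p τ * W Q σ' (m+2-p) τ)
          = 2*σ 1*(Complex.I*(2*σ 1*δ)*Af Q τ + c₁) + 2*δ*W Q σ' 2 τ := by
        rw [← Finset.sum_sub_distrib]
        have hterm : ∀ p ∈ Finset.Ico 1 (m+2),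
            W Q σ p τ * W Q σ (m+2-p) τ - W Q σ' p τ * W Q σ' (m+2-p) τ
            = (if p = 1 then σ 1*(Complex.I*(2*σ 1*δ)*Af Q τ + c₁) else 0)
            + ((if p = m+1 then σ 1*(Complex.I*(2*σ 1*δ)*Af Q τ + c₁) else 0)
            + ((if p = 2 then δ*W Q σ' 2 τ else 0)
            + (if p = m then δ*W Q σ' 2 τ else 0))) := by
          intro p hp
          have hp' := Finset.mem_Ico.mp hp
          by_cases e1 : p = 1
          · subst e1
            rw [if_pos rfl, if_neg (by omega), if_neg (by omega), if_neg (by omega)]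
            rw [show m+2-1 = m+1 by omega, W1_eq, W1_eq,
              D2 hQc m hm σ σ' hag τ, ← hag 1 (by omega)]
            ring
          · by_cases e2 : p = 2
            · subst e2
              rw [if_neg (by omega), if_neg (by omega), if_pos rfl, if_neg (by omega)]
              rw [show m+2-2 = m by omega, W_congr σ σ' m hag 2 (by omega) τ,
                D1 hQc m hm σ σ' hag τ]
              ring
            · by_cases em : p = m
              · rw [if_neg e1, if_neg (by omega), if_neg e2, if_pos em]
                rw [em, show m+2-m = 2 by omega, D1 hQc m hm σ σ' hag τ,
                  W_congr σ σ' m hag 2 (by omega) τ]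
                ring
              · by_cases em1 : p = m+1
                · rw [if_neg e1, if_pos em1, if_neg e2, if_neg (by omega)]
                  rw [em1, show m+2-(m+1) = 1 by omega, W1_eq, W1_eq,
                    D2 hQc m hm σ σ' hag τ, ← hag 1 (by omega)]
                  ring
                · rw [if_neg e1, if_neg em1, if_neg e2, if_neg em]
                  rw [W_congr σ σ' m hag p (by omega) τ,
                    W_congr σ σ' m hag (m+2-p) (by omega) τ]
                  ring
        rw [Finset.sum_congr rfl hterm, Finset.sum_add_distrib, Finset.sum_add_distrib,
          Finset.sum_add_distrib,
          Finset.sum_ite_eq' (Finset.Ico 1 (m+2)) 1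
            (fun _ => σ 1*(Complex.I*(2*σ 1*δ)*Af Q τ + c₁)),
          Finset.sum_ite_eq' (Finset.Ico 1 (m+2)) (m+1)
            (fun _ => σ 1*(Complex.I*(2*σ 1*δ)*Af Q τ + c₁)),
          Finset.sum_ite_eq' (Finset.Ico 1 (m+2)) 2 (fun _ => δ*W Q σ' 2 τ),
          Finset.sum_ite_eq' (Finset.Ico 1 (m+2)) m (fun _ => δ*W Q σ' 2 τ),
          if_pos (Finset.mem_Ico.mpr ⟨by omega, by omega⟩),
          if_pos (Finset.mem_Ico.mpr ⟨by omega, by omega⟩),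
          if_pos (Finset.mem_Ico.mpr ⟨by omega, by omega⟩),
          if_pos (Finset.mem_Ico.mpr ⟨by omega, by omega⟩)]
        ring
      rw [hε]
      have := sub_eq_iff_eq_add'.mp hsub
      rw [this]
      ring
  have hprim : ∀ u : ℝ, primC (Sg Q σ (m+2)) u
      = primC (Sg Q σ' (m+2)) u + Gf Q (σ 1) δ c₁ (σ' 2) ε u := by
    apply eq_of_deriv (φ := Sg Q σ (m+2))
    · intro s; exact primC_hasDerivAt (Sg_cont hQc σ (m+2)) s
    · intro s
      have hd := (primC_hasDerivAt (Sg_cont hQc σ' (m+2)) s).add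
        (Gf_deriv hQc (σ 1) δ c₁ (σ' 2) ε s)
      have heq : Sg Q σ' (m+2) s
          + (2*Complex.I*(σ 1)^2*δ*(Q s*Af Q s + Af Q s*Q s) + 2*(σ 1)*c₁*Q s
            + 2*δ*(Complex.I*((σ 1)^2*(Q s*Af Q s + Af Q s*Q s)/2 - Q s * Jf Q s)
              + (σ' 2)*Q s) + ε*Q s)
          = Sg Q σ (m+2) s := by
        rw [key s, W2_eq hQc, ← hag 1 (by omega)]
        ring
      rwa [heq] at hd
    · rw [primC_zero, primC_zero, Gf_zero, add_zero]
  rw [W_eq₃ Q σ (m+2) (by omega) t, W_eq₃ Q σ' (m+2) (by omega) t]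
  have h₁ : (∫ τ in (0:ℝ)..t, Q τ * ∑ p ∈ Finset.Ico 1 (m+2), W Q σ p τ * W Q σ (m+2-p) τ)
      = primC (Sg Q σ (m+2)) t := rfl
  have h₂ : (∫ τ in (0:ℝ)..t, Q τ * ∑ p ∈ Finset.Ico 1 (m+2), W Q σ' p τ * W Q σ' (m+2-p) τ)
      = primC (Sg Q σ' (m+2)) t := rfl
  rw [h₁, h₂, hprim t]
  ring

end

section
variable {T : ℝ} {Q : ℝ → ℂ}

lemma diff_main (hQc : Continuous Q) (h0 : Af Q T = 0) (h1 : Bf Q T = 0)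
    (m : ℕ) (hm : 2 ≤ m) (σ σ' : ℕ → ℂ) (hag : ∀ j, j < m → σ j = σ' j) :
    (∫ τ in (0:ℝ)..T, Sg Q σ (m+3) τ)
      = (∫ τ in (0:ℝ)..T, Sg Q σ' (m+3) τ) + 4 * σ' 1 * (σ m - σ' m) * Kc Q T := by
  set δ := σ m - σ' m with hδ
  set c₁ := σ (m+1) - σ' (m+1) with hc₁
  set c₂ := σ (m+2) - σ' (m+2) with hc₂
  set ε := if m = 2 then δ^2 else 0 with hε
  set η : ℂ := if m = 2 then 2 else 0 with hη
  set θ : ℂ := if m = 3 then 1 else 0 with hθ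
  set Efun : ℝ → ℂ := fun τ =>
    2*σ 1*(Complex.I * Gf Q (σ 1) δ c₁ (σ' 2) ε τ + c₂)
    + 2*(W Q σ' 2 τ)*(Complex.I*(2*σ 1*δ)*Af Q τ + c₁)
    + 2*δ*(W Q σ' 3 τ)
    + η*(δ*(Complex.I*(2*σ 1*δ)*Af Q τ + c₁)) + θ*δ^2 with hE
  have key : ∀ τ : ℝ, Sg Q σ (m+3) τ = Sg Q σ' (m+3) τ + Q τ * Efun τ := by
    intro τ
    rw [Sg, Sg, hE]
    rcases Nat.lt_or_ge m 4 with h4 | h4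
    · rcases Nat.lt_or_ge m 3 with h3 | _
      · -- m = 2
        have hm2 : m = 2 := by omega
        subst hm2
        rw [if_pos rfl] at hε
        rw [if_pos rfl] at hη
        rw [if_neg (by norm_num)] at hθ
        have hδ' : δ = σ 2 - σ' 2 := hδ
        have hc₁' : c₁ = σ 3 - σ' 3 := hc₁
        have hc₂' : c₂ = σ 4 - σ' 4 := hc₂
        have hd1 := D1 hQc 2 (by norm_num) σ σ' hag τ
        rw [← hδ'] at hd1
        have hd2 := D2 hQc 2 (by norm_num) σ σ' hag τ
        norm_num at hd2
        rw [← hδ', ← hc₁'] at hd2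
        have hd3 := D3 hQc 2 (by norm_num) σ σ' hag τ
        rw [if_pos rfl] at hd3
        norm_num at hd3
        rw [← hδ', ← hc₁', ← hc₂'] at hd3
        rw [hε, hη, hθ]
        rw [Finset.sum_Ico_succ_top (by norm_num), Finset.sum_Ico_succ_top (by norm_num),
          Finset.sum_Ico_succ_top (by norm_num), Finset.sum_Ico_succ_top (by norm_num),
          Finset.Ico_self, Finset.sum_empty,
          Finset.sum_Ico_succ_top (by norm_num), Finset.sum_Ico_succ_top (by norm_num),
          Finset.sum_Ico_succ_top (by norm_num), Finset.sum_Ico_succ_top (by norm_num),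
          Finset.Ico_self, Finset.sum_empty]
        norm_num
        rw [W1_eq, W1_eq, hd1, hd2, hd3, ← hag 1 (by omega)]
        ring
      · -- m = 3
        have hm3 : m = 3 := by omega
        subst hm3
        rw [if_neg (by norm_num)] at hε
        rw [if_neg (by norm_num)] at hη
        rw [if_pos rfl] at hθ
        have hδ' : δ = σ 3 - σ' 3 := hδ
        have hc₁' : c₁ = σ 4 - σ' 4 := hc₁
        have hc₂' : c₂ = σ 5 - σ' 5 := hc₂
        have hd1 := D1 hQc 3 (by norm_num) σ σ' hag τ
        rw [← hδ'] at hd1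
        have hd2 := D2 hQc 3 (by norm_num) σ σ' hag τ
        norm_num at hd2
        rw [← hδ', ← hc₁'] at hd2
        have hd3 := D3 hQc 3 (by norm_num) σ σ' hag τ
        rw [if_neg (by norm_num)] at hd3
        norm_num at hd3
        rw [← hδ', ← hc₁', ← hc₂'] at hd3
        rw [hε, hη, hθ]
        rw [Finset.sum_Ico_succ_top (by norm_num), Finset.sum_Ico_succ_top (by norm_num),
          Finset.sum_Ico_succ_top (by norm_num), Finset.sum_Ico_succ_top (by norm_num),
          Finset.sum_Ico_succ_top (by norm_num), Finset.Ico_self, Finset.sum_empty,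
          Finset.sum_Ico_succ_top (by norm_num), Finset.sum_Ico_succ_top (by norm_num),
          Finset.sum_Ico_succ_top (by norm_num), Finset.sum_Ico_succ_top (by norm_num),
          Finset.sum_Ico_succ_top (by norm_num), Finset.Ico_self, Finset.sum_empty]
        norm_num
        rw [W1_eq, W1_eq, hd1, hd2, hd3, ← hag 1 (by omega),
          W_congr σ σ' 3 hag 2 (by omega) τ]
        ring
    · -- generic m ≥ 4 : changed indices 1,2,3,m,m+1,m+2
      rw [if_neg (by omega)] at hε
      rw [if_neg (by omega)] at hη
      rw [if_neg (by omega)] at hθ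
      have hd1 := D1 hQc m hm σ σ' hag τ
      rw [← hδ] at hd1
      have hd2 := D2 hQc m hm σ σ' hag τ
      rw [← hδ, ← hc₁] at hd2
      have hd3 := D3 hQc m hm σ σ' hag τ
      rw [if_neg (by omega : ¬ m = 2)] at hd3
      rw [← hδ, ← hc₁, ← hc₂] at hd3
      rw [hε, hη, hθ]
      have hsub : (∑ p ∈ Finset.Ico 1 (m+3), W Q σ p τ * W Q σ (m+3-p) τ)
          - (∑ p ∈ Finset.Ico 1 (m+3), W Q σ' p τ * W Q σ' (m+3-p) τ)
          = 2*σ 1*(Complex.I * Gf Q (σ 1) δ c₁ (σ' 2) 0 τ + c₂)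
            + 2*(W Q σ' 2 τ)*(Complex.I*(2*σ 1*δ)*Af Q τ + c₁)
            + 2*δ*(W Q σ' 3 τ) := by
        rw [← Finset.sum_sub_distrib]
        have hterm : ∀ p ∈ Finset.Ico 1 (m+3),
            W Q σ p τ * W Q σ (m+3-p) τ - W Q σ' p τ * W Q σ' (m+3-p) τ
            = (if p = 1 then σ 1*(Complex.I * Gf Q (σ 1) δ c₁ (σ' 2) 0 τ + c₂) else 0)
            + ((if p = m+2 then σ 1*(Complex.I * Gf Q (σ 1) δ c₁ (σ' 2) 0 τ + c₂) else 0)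
            + ((if p = 2 then (W Q σ' 2 τ)*(Complex.I*(2*σ 1*δ)*Af Q τ + c₁) else 0)
            + ((if p = m+1 then (W Q σ' 2 τ)*(Complex.I*(2*σ 1*δ)*Af Q τ + c₁) else 0)
            + ((if p = 3 then δ*(W Q σ' 3 τ) else 0)
            + (if p = m then δ*(W Q σ' 3 τ) else 0))))) := by
          intro p hp
          have hp' := Finset.mem_Ico.mp hp
          by_cases e1 : p = 1
          · subst e1
            rw [if_pos rfl, if_neg (by omega), if_neg (by omega), if_neg (by omega),
              if_neg (by omega), if_neg (by omega)]
            rw [show m+3-1 = m+2 by omega, W1_eq, W1_eq, hd3, ← hag 1 (by omega)]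
            ring
          · by_cases e2 : p = 2
            · subst e2
              rw [if_neg (by omega), if_neg (by omega), if_pos rfl, if_neg (by omega),
                if_neg (by omega), if_neg (by omega)]
              rw [show m+3-2 = m+1 by omega, W_congr σ σ' m hag 2 (by omega) τ, hd2]
              ring
            · by_cases e3 : p = 3
              · subst e3
                rw [if_neg (by omega), if_neg (by omega), if_neg (by omega),
                  if_neg (by omega), if_pos rfl, if_neg (by omega)]
                rw [show m+3-3 = m by omega, W_congr σ σ' m hag 3 (by omega) τ, hd1]
                ring
              · by_cases em : p = m
                · rw [if_neg e1, if_neg (by omega), if_neg e2, if_neg (by omega),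
                    if_neg e3, if_pos em]
                  rw [em, show m+3-m = 3 by omega, hd1,
                    W_congr σ σ' m hag 3 (by omega) τ]
                  ring
                · by_cases em1 : p = m+1
                  · rw [if_neg e1, if_neg (by omega), if_neg e2, if_pos em1,
                      if_neg e3, if_neg em]
                    rw [em1, show m+3-(m+1) = 2 by omega, hd2,
                      W_congr σ σ' m hag 2 (by omega) τ]
                    ring
                  · by_cases em2 : p = m+2
                    · rw [if_neg e1, if_pos em2, if_neg e2, if_neg em1, if_neg e3,
                        if_neg em]
                      rw [em2, show m+3-(m+2) = 1 by omega, W1_eq, W1_eq,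
                        hd3, ← hag 1 (by omega)]
                      ring
                    · rw [if_neg e1, if_neg em2, if_neg e2, if_neg em1, if_neg e3,
                        if_neg em]
                      rw [W_congr σ σ' m hag p (by omega) τ,
                        W_congr σ σ' m hag (m+3-p) (by omega) τ]
                      ring
        rw [Finset.sum_congr rfl hterm, Finset.sum_add_distrib, Finset.sum_add_distrib,
          Finset.sum_add_distrib, Finset.sum_add_distrib, Finset.sum_add_distrib,
          Finset.sum_ite_eq' (Finset.Ico 1 (m+3)) 1
            (fun _ => σ 1*(Complex.I * Gf Q (σ 1) δ c₁ (σ' 2) 0 τ + c₂)),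
          Finset.sum_ite_eq' (Finset.Ico 1 (m+3)) (m+2)
            (fun _ => σ 1*(Complex.I * Gf Q (σ 1) δ c₁ (σ' 2) 0 τ + c₂)),
          Finset.sum_ite_eq' (Finset.Ico 1 (m+3)) 2
            (fun _ => (W Q σ' 2 τ)*(Complex.I*(2*σ 1*δ)*Af Q τ + c₁)),
          Finset.sum_ite_eq' (Finset.Ico 1 (m+3)) (m+1)
            (fun _ => (W Q σ' 2 τ)*(Complex.I*(2*σ 1*δ)*Af Q τ + c₁)),
          Finset.sum_ite_eq' (Finset.Ico 1 (m+3)) 3 (fun _ => δ*(W Q σ' 3 τ)),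
          Finset.sum_ite_eq' (Finset.Ico 1 (m+3)) m (fun _ => δ*(W Q σ' 3 τ)),
          if_pos (Finset.mem_Ico.mpr ⟨by omega, by omega⟩),
          if_pos (Finset.mem_Ico.mpr ⟨by omega, by omega⟩),
          if_pos (Finset.mem_Ico.mpr ⟨by omega, by omega⟩),
          if_pos (Finset.mem_Ico.mpr ⟨by omega, by omega⟩),
          if_pos (Finset.mem_Ico.mpr ⟨by omega, by omega⟩),
          if_pos (Finset.mem_Ico.mpr ⟨by omega, by omega⟩)]
        ring
      have := sub_eq_iff_eq_add'.mp hsub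
      rw [this]
      ring
  -- integrate
  have hEcont : Continuous Efun := by
    rw [hE]
    have hG := Gf_cont hQc (σ 1) δ c₁ (σ' 2) ε
    have h2 := W_cont hQc σ' 2
    have h3 := W_cont hQc σ' 3
    have hA := Af_cont hQc
    fun_prop
  have hsplit : (∫ τ in (0:ℝ)..T, Sg Q σ (m+3) τ)
      = (∫ τ in (0:ℝ)..T, Sg Q σ' (m+3) τ) + ∫ τ in (0:ℝ)..T, Q τ * Efun τ := by
    have h1' : (∫ τ in (0:ℝ)..T, Sg Q σ (m+3) τ)
        = ∫ τ in (0:ℝ)..T, (Sg Q σ' (m+3) τ + Q τ * Efun τ) := by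
      apply intervalIntegral.integral_congr
      intro x _
      exact key x
    rw [h1', integral_split (h := fun τ => Q τ * Efun τ) (Sg_cont hQc σ' (m+3)) (hQc.mul hEcont)]
  rw [hsplit]
  congr 1
  -- evaluate ∫ Q * Efun via the combo lemma
  have hcon : (∫ τ in (0:ℝ)..T, Q τ * Efun τ)
      = ∫ τ in (0:ℝ)..T,
        ((2*σ 1*c₂ + 2*(σ' 2)*c₁ + 2*δ*(σ' 3) + η*δ*c₁ + θ*δ^2) * Q τ +
        ((Complex.I*(2*σ 1*(2*σ 1*c₁+2*δ*(σ' 2)+ε)) + Complex.I*(2*(σ' 1)^2*c₁)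
            + Complex.I*(4*σ 1*(σ' 2)*δ) + Complex.I*(4*(σ' 1)*(σ' 2)*δ)
            + Complex.I*(2*η*σ 1*δ^2)) * (Q τ * Af Q τ) +
        ((Complex.I*Complex.I*(6*(σ 1)^3*δ + 4*(σ' 1)^2*(σ 1)*δ + 2*(σ' 1)^3*δ))
            * (Q τ * Af Q τ * Af Q τ) +
        ((-Complex.I*(2*c₁)) * (Q τ * Jf Q τ) +
        ((-(Complex.I*Complex.I)*(4*(σ 1)*δ)) * (Q τ * Af Q τ * Jf Q τ) +
        ((0:ℂ) * (Q τ * Jf Q τ * Jf Q τ) +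
        (-(Complex.I*Complex.I)*(4*σ 1*δ + 4*(σ' 1)*δ)) * (Q τ * Bf Q τ))))))) := by
    apply intervalIntegral.integral_congr
    intro x _
    dsimp only
    rw [hE]
    dsimp only
    rw [W2_eq hQc, W3_eq hQc]
    unfold Gf
    ring
  rw [hcon, combo hQc h0 h1]
  have hI : Complex.I * Complex.I = -1 := Complex.I_mul_I
  rw [hI]
  ring
end

section
variable {T : ℝ} {Q : ℝ → ℂ}

lemma W2_per (hQc : Continuous Q) (hQp : Periodic Q T) (h0 : Af Q T = 0) (σ : ℕ → ℂ) :
    Periodic (W Q σ 2) T := by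
  intro t
  rw [W2_eq hQc, W2_eq hQc, Af_per hQc hQp h0 t, Jf_per hQc hQp h0 t]

lemma Sg_per (hQp : Periodic Q T) (σ : ℕ → ℂ) (n : ℕ)
    (hlow : ∀ p, 1 ≤ p → p < n → Periodic (W Q σ p) T) : Periodic (Sg Q σ n) T := by
  intro t
  unfold Sg
  rw [hQp t]
  congr 1
  apply Finset.sum_congr rfl
  intro p hp
  have hp' := Finset.mem_Ico.mp hp
  rw [hlow p (by omega) (by omega) t, hlow (n-p) (by omega) (by omega) t]

lemma Wn_per (hQc : Continuous Q) (hQp : Periodic Q T) (σ : ℕ → ℂ) (n : ℕ) (hn : 3 ≤ n)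
    (hlow : ∀ p, 1 ≤ p → p < n → Periodic (W Q σ p) T)
    (hzero : (∫ τ in (0:ℝ)..T, Sg Q σ n τ) = 0) : Periodic (W Q σ n) T := by
  intro t
  rw [W_eq₃ Q σ n hn (t+T), W_eq₃ Q σ n hn t]
  have hps : (∫ τ in (0:ℝ)..(t+T), Q τ * ∑ p ∈ Finset.Ico 1 n, W Q σ p τ * W Q σ (n-p) τ)
      = ∫ τ in (0:ℝ)..t, Q τ * ∑ p ∈ Finset.Ico 1 n, W Q σ p τ * W Q σ (n-p) τ :=
    primitive_periodic (Sg_cont hQc σ n) (Sg_per hQp σ n hlow) hzero t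
  rw [hps]

/-- the recursively chosen constants -/
def kap (Q : ℝ → ℂ) (T : ℝ) (κ₁ : ℂ) : ℕ → ℂ
  | 0 => 0
  | 1 => κ₁
  | (m+2) => - (∫ τ in (0:ℝ)..T,
        Sg Q (fun j => if h : j < m+2 then kap Q T κ₁ j else 0) (m+5) τ)
      / (4 * κ₁ * Kc Q T)
termination_by n => n
decreasing_by exact h

lemma kap_zero (κ₁ : ℂ) : kap Q T κ₁ 0 = 0 := by rw [kap]
lemma kap_one (κ₁ : ℂ) : kap Q T κ₁ 1 = κ₁ := by rw [kap]
lemma kap_eq (κ₁ : ℂ) (m : ℕ) : kap Q T κ₁ (m+2)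
    = - (∫ τ in (0:ℝ)..T,
        Sg Q (fun j => if _h : j < m+2 then kap Q T κ₁ j else 0) (m+5) τ)
      / (4 * κ₁ * Kc Q T) := by rw [kap]

lemma zero3 (hQc : Continuous Q) (h0 : Af Q T = 0) (h1 : Bf Q T = 0) (σ : ℕ → ℂ) :
    (∫ τ in (0:ℝ)..T, Sg Q σ 3 τ) = 0 := by
  have hcon : (∫ τ in (0:ℝ)..T, Sg Q σ 3 τ)
      = ∫ τ in (0:ℝ)..T, (2 * σ 1) * (Q τ * W Q σ 2 τ) := by
    apply intervalIntegral.integral_congr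
    intro x _
    rw [Sg]
    rw [Finset.sum_Ico_succ_top (by norm_num), Finset.sum_Ico_succ_top (by norm_num),
      Finset.Ico_self, Finset.sum_empty]
    norm_num [W1_eq]
    ring
  rw [hcon, intervalIntegral.integral_const_mul, qW2 hQc h0 h1 σ, mul_zero]

lemma main_periodic (hT : 0 < T) (hQc : Continuous Q) (hQp : Periodic Q T)
    (h0 : Af Q T = 0) (h1 : Bf Q T = 0) (hK : Kc Q T ≠ 0)
    (κ₁ : ℂ) (hκ1 : κ₁ ≠ 0)
    (hκsq : 2 * κ₁^2 * Kc Q T - 2 * (starRingEnd ℂ) (Kc Q T) = 0) :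
    ∀ n, 1 ≤ n → Periodic (W Q (kap Q T κ₁) n) T := by
  set σ := kap Q T κ₁ with hσ
  have hσ1 : σ 1 = κ₁ := kap_one κ₁
  have hzero : ∀ n, 3 ≤ n → (∫ τ in (0:ℝ)..T, Sg Q σ n τ) = 0 := by
    intro n hn
    rcases Nat.lt_or_ge n 5 with h5 | h5
    · rcases Nat.lt_or_ge n 4 with h4 | h4
      · have : n = 3 := by omega
        subst this
        exact zero3 hQc h0 h1 σ
      · have : n = 4 := by omega
        subst this
        rw [order4 hQc h0 h1 σ, hσ1]
        linear_combination hκsq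
    · -- n = m+3 with m ≥ 2 ; let m = n - 3, k = m - 2
      obtain ⟨k, rfl⟩ : ∃ k, n = k + 5 := ⟨n - 5, by omega⟩
      set σ' : ℕ → ℂ := fun j => if _h : j < k+2 then kap Q T κ₁ j else 0 with hσ'
      have hag : ∀ j, j < k+2 → σ j = σ' j := by
        intro j hj
        rw [hσ']
        simp only [dif_pos hj, hσ]
      have hd := diff_main hQc h0 h1 (k+2) (by omega) σ σ' hag
      have hσ'1 : σ' 1 = κ₁ := by
        rw [hσ']; simp only [dif_pos (by omega : 1 < k+2)]; exact kap_one κ₁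
      have hσ'm : σ' (k+2) = 0 := by
        rw [hσ']; simp only [dif_neg (lt_irrefl (k+2))]
      have hσm : σ (k+2) = - (∫ τ in (0:ℝ)..T, Sg Q σ' (k+5) τ) / (4 * κ₁ * Kc Q T) :=
        kap_eq κ₁ k
      have hne : (4 : ℂ) * κ₁ * Kc Q T ≠ 0 := by
        apply mul_ne_zero (mul_ne_zero (by norm_num) hκ1) hK
      have hk5 : k + 2 + 3 = k + 5 := by omega
      rw [hk5] at hd
      rw [hd, hσ'1, hσ'm, hσm]
      field_simp
      ring
  intro n hn
  induction n using Nat.strong_induction_on with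
  | _ n ih =>
    match n, hn with
    | 1, _ => intro t; rw [W1_eq, W1_eq]
    | 2, _ => exact W2_per hQc hQp h0 σ
    | (m+3), _ =>
      exact Wn_per hQc hQp σ (m+3) (by omega)
        (fun p hp1 hp2 => ih p (by omega) hp1) (hzero (m+3) (by omega))

end

end Sec



theorem elimination_of_secular_terms_condition_III
    (ω : ℝ) (hω : 0 < ω) (T : ℝ) (hT : T = 2 * Real.pi / ω)
    (f : ℝ → ℝ) (hf : Continuous f) (hper : Function.Periodic f T)
    (hmean : (∫ τ in (0:ℝ)..T, f τ) = 0)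
    (q Q₀ Q₁ Q₃ : ℝ → ℂ)
    (hq : ∀ t : ℝ, q t = Complex.exp (Complex.I * ∫ τ in (0:ℝ)..t, (f τ : ℂ)))
    (hQ₀ : ∀ t : ℝ, Q₀ t = q t ^ 2)
    (hQ₁ : ∀ t : ℝ, Q₁ t = Q₀ t * ∫ τ in (0:ℝ)..t, (starRingEnd ℂ) (Q₀ τ))
    (hQ₃ : ∀ t : ℝ, Q₃ t = Q₀ t * ∫ τ in (0:ℝ)..t, Q₁ τ)
    (h0 : MeanValueIs Q₀ 0) (h1 : MeanValueIs Q₁ 0)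
    (h3 : ∃ M₃ : ℂ, MeanValueIs Q₃ M₃ ∧ M₃ ≠ 0) :
    ∃ κ : ℕ → ℂ, ∀ v : ℕ → ℝ → ℂ,
      (∀ t : ℝ, v 1 t = κ 1 * q t) →
      (∀ t : ℝ, v 2 t =
        q t * (Complex.I * (∫ τ in (0:ℝ)..t, ((κ 1) ^ 2 * Q₀ τ - (starRingEnd ℂ) (Q₀ τ))) + κ 2)) →
      (∀ n : ℕ, 3 ≤ n → ∀ t : ℝ, v n t =
        q t * (Complex.I * (∫ τ in (0:ℝ)..t, ∑ p ∈ Finset.Ico 1 n, v p τ * v (n - p) τ) + κ n)) →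
      ∀ n : ℕ, 1 ≤ n → Function.Periodic (v n) T := by
  classical
  have hT0 : 0 < T := by
    rw [hT]
    have := Real.pi_pos
    positivity
  -- basic structure of q and Q₀
  have hfc : Continuous (fun τ : ℝ => (f τ : ℂ)) := Complex.continuous_ofReal.comp hf
  have hqe : q = fun t => Complex.exp (Complex.I * Sec.primC (fun τ : ℝ => (f τ : ℂ)) t) :=
    funext hq
  have hqc : Continuous q := by
    rw [hqe]
    exact Complex.continuous_exp.comp (continuous_const.mul (Sec.primC_continuous hfc))
  have hfper : Function.Periodic (fun τ : ℝ => (f τ : ℂ)) T := fun t => by simp [hper t]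
  have hfint : (∫ τ in (0:ℝ)..T, (f τ : ℂ)) = 0 := by
    rw [intervalIntegral.integral_ofReal, hmean]
    simp
  have hqper : Function.Periodic q T := by
    intro t
    rw [hqe]
    simp only
    have hP : Sec.primC (fun τ : ℝ => (f τ : ℂ)) (t + T)
        = Sec.primC (fun τ : ℝ => (f τ : ℂ)) t := Sec.primitive_periodic hfc hfper hfint t
    rw [hP]
  have hQ0e : Q₀ = fun t => q t ^ 2 := funext hQ₀
  have hQ0c : Continuous Q₀ := by rw [hQ0e]; exact hqc.pow 2
  have hQ0per : Function.Periodic Q₀ T := fun t => by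
    rw [hQ0e]; simp only; rw [hqper t]
  -- mean value conditions
  have h0' : Sec.Af Q₀ T = 0 := by
    have := Sec.meanValue_eq hT0 hQ0c hQ0per h0
    rw [smul_zero] at this
    exact this
  have hQ1e : Q₁ = fun t => Q₀ t * Sec.Jf Q₀ t := funext fun t => hQ₁ t
  have hQ1c : Continuous Q₁ := by rw [hQ1e]; exact Sec.QJ_cont hQ0c
  have hQ1per : Function.Periodic Q₁ T := by
    rw [hQ1e]; exact Sec.QJ_per hQ0c hQ0per h0'
  have h1' : Sec.Bf Q₀ T = 0 := by
    have := Sec.meanValue_eq hT0 hQ1c hQ1per h1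
    rw [smul_zero] at this
    simp only [hQ1e] at this
    exact this
  obtain ⟨M₃, hM3, hM3ne⟩ := h3
  have hQ3e : Q₃ = fun t => Q₀ t * Sec.Bf Q₀ t := by
    funext t
    rw [hQ₃ t]
    congr 1
    apply intervalIntegral.integral_congr
    intro x _
    exact hQ₁ x
  have hQ3c : Continuous Q₃ := by rw [hQ3e]; exact hQ0c.mul (Sec.Bf_cont hQ0c)
  have hQ3per : Function.Periodic Q₃ T := by
    intro t
    rw [hQ3e]
    simp only
    rw [hQ0per t, Sec.Bf_per hQ0c hQ0per h0' h1' t]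
  have hKval : Sec.Kc Q₀ T = T • M₃ := by
    have := Sec.meanValue_eq hT0 hQ3c hQ3per hM3
    simp only [hQ3e] at this
    exact this
  have hK : Sec.Kc Q₀ T ≠ 0 := by
    rw [hKval]
    exact smul_ne_zero (ne_of_gt hT0) hM3ne
  -- choose κ₁ with κ₁² = conj K / K
  have hKc : (starRingEnd ℂ) (Sec.Kc Q₀ T) ≠ 0 := by
    intro h
    apply hK
    have := congrArg (starRingEnd ℂ) h
    simpa using this
  set z : ℂ := (starRingEnd ℂ) (Sec.Kc Q₀ T) / Sec.Kc Q₀ T with hz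
  have hzne : z ≠ 0 := div_ne_zero hKc hK
  set κ₁ : ℂ := Complex.exp (Complex.log z / 2) with hκ₁
  have hκ1ne : κ₁ ≠ 0 := Complex.exp_ne_zero _
  have hκsq : κ₁ ^ 2 = z := by
    rw [hκ₁, sq, ← Complex.exp_add]
    rw [show Complex.log z / 2 + Complex.log z / 2 = Complex.log z by ring]
    exact Complex.exp_log hzne
  have hκsq' : 2 * κ₁^2 * Sec.Kc Q₀ T - 2 * (starRingEnd ℂ) (Sec.Kc Q₀ T) = 0 := by
    rw [hκsq, hz]
    field_simp
    ring
  -- the sequence of constants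
  set κ : ℕ → ℂ := Sec.kap Q₀ T κ₁ with hκ
  have hWper := Sec.main_periodic hT0 hQ0c hQ0per h0' h1' hK κ₁ hκ1ne hκsq'
  refine ⟨κ, ?_⟩
  intro v hv1 hv2 hv3
  -- identify v with q * W
  have hvW : ∀ n, 1 ≤ n → ∀ t, v n t = q t * Sec.W Q₀ κ n t := by
    intro n
    induction n using Nat.strong_induction_on with
    | _ n ih =>
      intro hn t
      match n, hn with
      | 1, _ =>
        rw [hv1 t, Sec.W1_eq]
        have : κ 1 = κ₁ := Sec.kap_one κ₁
        rw [this]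
        ring
      | 2, _ =>
        rw [hv2 t]
        congr 1
        rw [Sec.W]
      | (m+3), _ =>
        rw [hv3 (m+3) (by omega) t, Sec.W_eq₃ Q₀ κ (m+3) (by omega) t]
        congr 2
        congr 1
        apply intervalIntegral.integral_congr
        intro x _
        dsimp only
        rw [Finset.mul_sum]
        apply Finset.sum_congr rfl
        intro p hp
        have hp' := Finset.mem_Ico.mp hp
        rw [ih p (by omega) (by omega) x, ih (m+3-p) (by omega) (by omega) x, hQ₀ x]
        ring
  intro n hn t
  rw [hvW n hn (t+T), hvW n hn t, hqper t, hWper n hn t]
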